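/- Every finite subset of the space D can be isometrically embedded at infinity into the hyperbolic plane; that is, D is an asymptotic subcone of the hyperbolic plane. -/

import Mathlib

open Set Filter

noncomputable section

/-- The space `D`: real functions on `[0, ρ)` with `f 0 = 0`, vanishing except
at finitely many points (the function is recorded on all of `ℝ`, vanishing
outside `[0, ρ)`). -/
structure Dp where
  ρ : ℝ
  toFun : ℝ → ℝ
  ρ_nonneg : 0 ≤ ρ
  zero_at_zero : toFun 0 = 0
  supp_subset : ∀ t, t ∉ Set.Ico 0 ρ → toFun t = 0
  finite_supp : {t | toFun t ≠ 0}.Finite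

/-- The moment of segregation of two elements of `D`. -/
noncomputable def segD (f1 f2 : Dp) : ℝ :=
  sSup {t | t ≤ min f1.ρ f2.ρ ∧ ∀ t' ∈ Set.Ico (0:ℝ) t, f1.toFun t' = f2.toFun t'}

/-- The metric on `D`: `d_D(f1, f2) = (ρ1 - s) + (ρ2 - s)`. -/
noncomputable def dD (f1 f2 : Dp) : ℝ := (f1.ρ - segD f1 f2) + (f2.ρ - segD f1 f2)

-- auxiliary lemmas about segD
def agreeSet (f1 f2 : Dp) : Set ℝ :=
  {t | t ≤ min f1.ρ f2.ρ ∧ ∀ t' ∈ Set.Ico (0:ℝ) t, f1.toFun t' = f2.toFun t'}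

lemma segD_eq_sSup (f1 f2 : Dp) : segD f1 f2 = sSup (agreeSet f1 f2) := rfl

lemma zero_mem_agreeSet (f1 f2 : Dp) : (0:ℝ) ∈ agreeSet f1 f2 := by
  refine ⟨le_min f1.ρ_nonneg f2.ρ_nonneg, ?_⟩
  intro t' ht'
  exact absurd ht' (by simp [Set.Ico])

lemma bddAbove_agreeSet (f1 f2 : Dp) : BddAbove (agreeSet f1 f2) :=
  ⟨min f1.ρ f2.ρ, fun _ ht => ht.1⟩

lemma segD_nonneg (f1 f2 : Dp) : 0 ≤ segD f1 f2 :=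
  le_csSup (bddAbove_agreeSet f1 f2) (zero_mem_agreeSet f1 f2)

lemma segD_le_min (f1 f2 : Dp) : segD f1 f2 ≤ min f1.ρ f2.ρ :=
  csSup_le ⟨0, zero_mem_agreeSet f1 f2⟩ (fun _ ht => ht.1)

lemma segD_agree (f1 f2 : Dp) : ∀ t' ∈ Set.Ico 0 (segD f1 f2), f1.toFun t' = f2.toFun t' := by
  intro t' ht'
  obtain ⟨t, htmem, hlt⟩ := exists_lt_of_lt_csSup ⟨0, zero_mem_agreeSet f1 f2⟩ ht'.2
  exact htmem.2 t' ⟨ht'.1, hlt⟩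

lemma segD_eq_of_ne {f1 f2 : Dp} {t0 : ℝ} (h0 : 0 ≤ t0) (hle : t0 ≤ min f1.ρ f2.ρ)
    (hag : ∀ t' ∈ Set.Ico 0 t0, f1.toFun t' = f2.toFun t')
    (hne : f1.toFun t0 ≠ f2.toFun t0) : segD f1 f2 = t0 := by
  have : agreeSet f1 f2 = Set.Iic t0 := by
    ext t
    constructor
    · intro ht
      by_contra hgt
      simp only [Set.mem_Iic, not_le] at hgt
      exact hne (ht.2 t0 ⟨h0, hgt⟩)
    · intro ht
      exact ⟨le_trans ht hle, fun t' ht' => hag t' ⟨ht'.1, lt_of_lt_of_le ht'.2 ht⟩⟩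
  rw [segD_eq_sSup, this, csSup_Iic]

lemma segD_of_forall_eq {f1 f2 : Dp} (h : ∀ t, f1.toFun t = f2.toFun t) :
    segD f1 f2 = min f1.ρ f2.ρ := by
  have : agreeSet f1 f2 = Set.Iic (min f1.ρ f2.ρ) := by
    ext t; exact ⟨fun ht => ht.1, fun ht => ⟨ht, fun t' _ => h t'⟩⟩
  rw [segD_eq_sSup, this, csSup_Iic]

lemma ne_at_segD {f1 f2 : Dp} (h : segD f1 f2 < min f1.ρ f2.ρ) :
    f1.toFun (segD f1 f2) ≠ f2.toFun (segD f1 f2) := by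
  set s := segD f1 f2 with hs
  intro heq
  -- finite set of "obstruction points" above s
  have hfin : (({t | f1.toFun t ≠ 0} ∪ {t | f2.toFun t ≠ 0} ∪ {min f1.ρ f2.ρ}) ∩ Set.Ioi s).Finite :=
    ((f1.finite_supp.union f2.finite_supp).union (Set.finite_singleton _)).inter_of_left _
  set F := hfin.toFinset with hF
  have hmemF : min f1.ρ f2.ρ ∈ F := by
    rw [hF, Set.Finite.mem_toFinset]
    exact ⟨Or.inr rfl, h⟩
  have hFne : F.Nonempty := ⟨_, hmemF⟩
  set u := F.min' hFne with hu
  have huF : u ∈ F := F.min'_mem hFne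
  have hsu : s < u := by
    have := (Set.Finite.mem_toFinset hfin).1 huF
    exact this.2
  have hule : u ≤ min f1.ρ f2.ρ := F.min'_le _ hmemF
  have hmem : u ∈ agreeSet f1 f2 := by
    refine ⟨hule, fun t' ht' => ?_⟩
    rcases lt_trichotomy t' s with hlt | hteq | hgt
    · exact segD_agree f1 f2 t' ⟨ht'.1, hlt⟩
    · rw [hteq]; exact heq
    · have hnF : t' ∉ F := fun hmem' => absurd (F.min'_le _ hmem') (not_le.mpr ht'.2)
      have h1 : f1.toFun t' = 0 := by
        by_contra hne1
        exact hnF (by rw [hF, Set.Finite.mem_toFinset]; exact ⟨Or.inl (Or.inl hne1), hgt⟩)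
      have h2 : f2.toFun t' = 0 := by
        by_contra hne2
        exact hnF (by rw [hF, Set.Finite.mem_toFinset]; exact ⟨Or.inl (Or.inr hne2), hgt⟩)
      rw [h1, h2]
  have : u ≤ s := le_csSup (bddAbove_agreeSet f1 f2) hmem
  exact absurd this (not_le.mpr hsu)


lemma dD_eq_zero {f1 f2 : Dp} (h : dD f1 f2 = 0) : f1.ρ = f2.ρ ∧ f1.toFun = f2.toFun := by
  have hle := segD_le_min f1 f2
  have h1 : segD f1 f2 ≤ f1.ρ := hle.trans (min_le_left _ _)
  have h2 : segD f1 f2 ≤ f2.ρ := hle.trans (min_le_right _ _)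
  have hs1 : f1.ρ = segD f1 f2 := by unfold dD at h; linarith
  have hs2 : f2.ρ = segD f1 f2 := by unfold dD at h; linarith
  refine ⟨hs1.trans hs2.symm, funext fun t => ?_⟩
  by_cases ht : t ∈ Set.Ico 0 (segD f1 f2)
  · exact segD_agree f1 f2 t ht
  · rw [f1.supp_subset t (by rwa [← hs1] at ht), f2.supp_subset t (by rwa [← hs2] at ht)]

/-- Truncation of an element of `D` at level `r` (assumed in `[0, ρ]` in applications). -/
def trunc (h : Dp) (r : ℝ) : Dp where
  ρ := min (max r 0) h.ρ
  toFun t := if t ∈ Set.Ico 0 (min (max r 0) h.ρ) then h.toFun t else 0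
  ρ_nonneg := le_min (le_max_right _ _) h.ρ_nonneg
  zero_at_zero := by split <;> simp [h.zero_at_zero]
  supp_subset := fun t ht => by rw [if_neg ht]
  finite_supp := h.finite_supp.subset (by
    intro t ht
    simp only [Set.mem_setOf_eq] at ht ⊢
    intro h0; apply ht; split <;> simp [h0])

lemma trunc_ρ {h : Dp} {r : ℝ} (h0 : 0 ≤ r) (h1 : r ≤ h.ρ) : (trunc h r).ρ = r := by
  simp [trunc, max_eq_left h0, min_eq_left h1]

lemma trunc_toFun {h : Dp} {r : ℝ} (h0 : 0 ≤ r) (h1 : r ≤ h.ρ) (t : ℝ) :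
    (trunc h r).toFun t = if t ∈ Set.Ico 0 r then h.toFun t else 0 := by
  simp [trunc, max_eq_left h0, min_eq_left h1]

lemma trunc_self (h : Dp) : trunc h h.ρ = h := by
  have h0 := h.ρ_nonneg
  cases h with
  | mk ρ f hρ hz hsupp hfin =>
    simp only [trunc, max_eq_left hρ, min_self]
    congr 1
    funext t
    by_cases ht : t ∈ Set.Ico 0 ρ
    · simp [ht]
    · simp [ht, hsupp t ht]

lemma dD_trunc_same (h : Dp) {r1 r2 : ℝ} (h01 : 0 ≤ r1) (h11 : r1 ≤ h.ρ)
    (h02 : 0 ≤ r2) (h12 : r2 ≤ h.ρ) : dD (trunc h r1) (trunc h r2) = |r1 - r2| := by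
  have hseg : segD (trunc h r1) (trunc h r2) = min r1 r2 := by
    have := segD_le_min (trunc h r1) (trunc h r2)
    rw [trunc_ρ h01 h11, trunc_ρ h02 h12] at this
    refine le_antisymm this ?_
    refine le_csSup (bddAbove_agreeSet _ _) ⟨by rw [trunc_ρ h01 h11, trunc_ρ h02 h12], ?_⟩
    intro t' ht'
    rw [trunc_toFun h01 h11, trunc_toFun h02 h12]
    have h1 : t' ∈ Set.Ico 0 r1 := ⟨ht'.1, lt_of_lt_of_le ht'.2 (min_le_left _ _)⟩
    have h2 : t' ∈ Set.Ico 0 r2 := ⟨ht'.1, lt_of_lt_of_le ht'.2 (min_le_right _ _)⟩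
    rw [if_pos h1, if_pos h2]
  unfold dD
  rw [hseg, trunc_ρ h01 h11, trunc_ρ h02 h12]
  rcases le_total r1 r2 with hle | hle
  · rw [min_eq_left hle, abs_of_nonpos (by linarith)]; ring
  · rw [min_eq_right hle, abs_of_nonneg (by linarith)]; ring

lemma Dp.ext' {x y : Dp} (h1 : x.ρ = y.ρ) (h2 : x.toFun = y.toFun) : x = y := by
  cases x; cases y; simp_all

lemma agreeSet_comm (a b : Dp) : agreeSet a b = agreeSet b a := by
  ext t
  constructor <;> rintro ⟨h1, h2⟩ <;>
    exact ⟨h1.trans (le_of_eq (min_comm _ _)), fun t' ht' => (h2 t' ht').symm⟩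

lemma segD_comm (a b : Dp) : segD a b = segD b a := by
  rw [segD_eq_sSup, segD_eq_sSup, agreeSet_comm]

lemma dD_comm (a b : Dp) : dD a b = dD b a := by
  unfold dD; rw [segD_comm]; ring

lemma segD_le_left (a b : Dp) : segD a b ≤ a.ρ := (segD_le_min a b).trans (min_le_left _ _)
lemma segD_le_right (a b : Dp) : segD a b ≤ b.ρ := (segD_le_min a b).trans (min_le_right _ _)

lemma trunc_seg_eq (a b : Dp) : trunc a (segD a b) = trunc b (segD a b) := by
  have h0 := segD_nonneg a b
  apply Dp.ext'
  · rw [trunc_ρ h0 (segD_le_left a b), trunc_ρ h0 (segD_le_right a b)]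
  · funext t
    rw [trunc_toFun h0 (segD_le_left a b), trunc_toFun h0 (segD_le_right a b)]
    by_cases ht : t ∈ Set.Ico 0 (segD a b)
    · rw [if_pos ht, if_pos ht]; exact segD_agree a b t ht
    · rw [if_neg ht, if_neg ht]

lemma trunc_eq_left {a b : Dp} (h : a.ρ = segD a b) : trunc b (segD a b) = a := by
  have h0 := segD_nonneg a b
  apply Dp.ext'
  · rw [trunc_ρ h0 (segD_le_right a b), h]
  · funext t
    rw [trunc_toFun h0 (segD_le_right a b)]
    by_cases ht : t ∈ Set.Ico 0 (segD a b)
    · rw [if_pos ht]; exact (segD_agree a b t ht).symm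
    · rw [if_neg ht]; exact (a.supp_subset t (by rwa [h])).symm

theorem Dp_geodesic (a b : Dp) : ∃ g : ℝ → Dp, g 0 = a ∧ g (dD a b) = b ∧
    ∀ x ∈ Set.Icc 0 (dD a b), ∀ y ∈ Set.Icc 0 (dD a b), dD (g x) (g y) = |x - y| := by
  classical
  set s := segD a b with hs
  set d1 := a.ρ - s with hd1
  set d2 := b.ρ - s with hd2
  have hs0 : 0 ≤ s := segD_nonneg a b
  have hsa : s ≤ a.ρ := segD_le_left a b
  have hsb : s ≤ b.ρ := segD_le_right a b
  have hd10 : 0 ≤ d1 := by rw [hd1]; linarith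
  have hd20 : 0 ≤ d2 := by rw [hd2]; linarith
  have hd : dD a b = d1 + d2 := by unfold dD; rw [hd1, hd2, hs]
  refine ⟨fun x => if x < d1 then trunc a (a.ρ - x) else trunc b (x - d1 + s), ?_, ?_, ?_⟩
  · -- g 0 = a
    simp only
    by_cases h : (0:ℝ) < d1
    · rw [if_pos h]; simpa using trunc_self a
    · have hd1z : d1 = 0 := le_antisymm (not_lt.mp h) hd10
      rw [if_neg h]
      simp only [hd1z, zero_sub, neg_zero, zero_add, sub_zero]
      exact trunc_eq_left ((by rw [hd1] at hd1z; linarith : a.ρ = s).trans hs)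
  · -- g d = b
    have hnd : ¬ (d1 + d2 < d1) := by linarith
    rw [hd]
    simp only
    rw [if_neg hnd]
    have : d1 + d2 - d1 + s = b.ρ := by rw [hd2]; ring
    rw [this, trunc_self b]
  · -- main distance computation
    have key : ∀ x ∈ Set.Icc 0 (dD a b), ∀ y ∈ Set.Icc 0 (dD a b), x ≤ y →
        dD ((fun x => if x < d1 then trunc a (a.ρ - x) else trunc b (x - d1 + s)) x)
           ((fun x => if x < d1 then trunc a (a.ρ - x) else trunc b (x - d1 + s)) y) = y - x := by
      intro x hx y hy hxy
      rw [hd] at hx hy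
      simp only
      rcases lt_or_ge y d1 with hyd | hyd
      · -- Case A : x ≤ y < d1
        have hxd : x < d1 := lt_of_le_of_lt hxy hyd
        rw [if_pos hxd, if_pos hyd]
        have b1 : 0 ≤ a.ρ - x := by rw [hd1] at hyd; linarith [hx.1]
        have b2 : a.ρ - x ≤ a.ρ := by linarith [hx.1]
        have b3 : 0 ≤ a.ρ - y := by rw [hd1] at hyd; linarith
        have b4 : a.ρ - y ≤ a.ρ := by linarith [hy.1]
        rw [dD_trunc_same a b1 b2 b3 b4]
        rw [show a.ρ - x - (a.ρ - y) = y - x by ring, abs_of_nonneg (by linarith)]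
      · rcases lt_or_ge x d1 with hxd | hxd
        · -- Case C : x < d1 ≤ y
          rw [if_pos hxd, if_neg (not_lt.mpr hyd)]
          set r1 := a.ρ - x with hr1
          set r2 := y - d1 + s with hr2
          have hr10 : 0 ≤ r1 := by rw [hr1, hd1] at *; linarith [hx.1]
          have hr1a : r1 ≤ a.ρ := by rw [hr1]; linarith [hx.1]
          have hr1s : s < r1 := by rw [hr1, hd1] at *; linarith
          have hr20 : s ≤ r2 := by rw [hr2]; linarith
          have hr2b : r2 ≤ b.ρ := by rw [hr2, hd2] at *; linarith [hy.2]
          rcases eq_or_lt_of_le hr20 with heq | hlt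
          · -- r2 = s : endpoints trunc a r1 and trunc b s = trunc a s
            rw [← heq, hs, ← trunc_seg_eq a b, ← hs]
            rw [dD_trunc_same a hr10 hr1a hs0 hsa]
            have hyd1 : y = d1 := by rw [hr2] at heq; linarith
            rw [show r1 - s = y - x by rw [hr1, hyd1, hd1]; ring,
              abs_of_nonneg (by linarith)]
          · -- s < r2, so s < min ρ, disagreement at s
            have hsmin : s < min a.ρ b.ρ := lt_min (lt_of_lt_of_le hr1s hr1a)
              (lt_of_lt_of_le hlt hr2b)
            have hne : a.toFun s ≠ b.toFun s := by rw [hs] at hsmin ⊢; exact ne_at_segD hsmin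
            have hseg : segD (trunc a r1) (trunc b r2) = s := by
              apply segD_eq_of_ne hs0
              · rw [trunc_ρ hr10 hr1a, trunc_ρ (hs0.trans hr20) hr2b]
                exact le_min hr1s.le hr20
              · intro t' ht'
                rw [trunc_toFun hr10 hr1a, trunc_toFun (hs0.trans hr20) hr2b,
                  if_pos ⟨ht'.1, lt_of_lt_of_le ht'.2 hr1s.le⟩,
                  if_pos ⟨ht'.1, lt_of_lt_of_le ht'.2 hr20⟩]
                exact segD_agree a b t' ht'
              · rw [trunc_toFun hr10 hr1a, trunc_toFun (hs0.trans hr20) hr2b,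
                  if_pos ⟨hs0, hr1s⟩, if_pos ⟨hs0, hlt⟩]
                exact hne
            unfold dD
            rw [hseg, trunc_ρ hr10 hr1a, trunc_ρ (hs0.trans hr20) hr2b, hr1, hr2, hd1]
            ring
        · -- Case B : d1 ≤ x ≤ y
          rw [if_neg (not_lt.mpr hxd), if_neg (not_lt.mpr hyd)]
          have b1 : 0 ≤ x - d1 + s := by linarith
          have b2 : x - d1 + s ≤ b.ρ := by rw [hd2] at *; linarith [hx.2]
          have b3 : 0 ≤ y - d1 + s := by linarith
          have b4 : y - d1 + s ≤ b.ρ := by rw [hd2] at *; linarith [hy.2]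
          rw [dD_trunc_same b b1 b2 b3 b4,
            show x - d1 + s - (y - d1 + s) = -(y - x) by ring, abs_neg,
            abs_of_nonneg (by linarith)]
    intro x hx y hy
    rcases le_total x y with hxy | hxy
    · rw [key x hx y hy hxy, abs_of_nonpos (by linarith), neg_sub]
    · rw [dD_comm, key y hy x hx hxy, abs_of_nonneg (by linarith)]

/-! ### Part 2 : embedding at infinity into the hyperbolic plane -/

def mF (i : ℕ) : ℝ := (i : ℝ) + 1

lemma mF_pos (i : ℕ) : 0 < mF i := by unfold mF; positivity

lemma mF_atTop : Tendsto mF atTop atTop :=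
  tendsto_atTop_add_const_right _ 1 tendsto_natCast_atTop_atTop

lemma tendsto_exp_mul_mF {c : ℝ} (hc : c < 0) :
    Tendsto (fun i : ℕ => Real.exp (c * mF i)) atTop (nhds 0) := by
  have h2 : Tendsto (fun i : ℕ => (-c) * mF i) atTop atTop :=
    (tendsto_const_mul_atTop_of_pos (by linarith)).mpr mF_atTop
  have h3 := Real.tendsto_exp_neg_atTop_nhds_zero.comp h2
  exact Tendsto.congr (fun i => congrArg Real.exp (by ring)) h3

lemma arsinh_eq_log (x : ℝ) : Real.arsinh x = Real.log (x + Real.sqrt (1 + x ^ 2)) := rfl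

lemma log_le_arsinh {x : ℝ} (hx : 1 ≤ x) : Real.log x ≤ Real.arsinh x := by
  rw [arsinh_eq_log]
  exact Real.log_le_log (by linarith) (by nlinarith [Real.sqrt_nonneg (1 + x^2)])

lemma arsinh_le_log {x : ℝ} (hx : 1 ≤ x) : Real.arsinh x ≤ Real.log 3 + Real.log x := by
  rw [arsinh_eq_log, ← Real.log_mul (by norm_num) (by linarith)]
  apply Real.log_le_log (by nlinarith [Real.sqrt_nonneg (1 + x^2)])
  have h1 : Real.sqrt (1 + x ^ 2) ≤ 1 + x := by
    rw [show (1:ℝ) + x = Real.sqrt ((1+x)^2) from (Real.sqrt_sq (by linarith)).symm]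
    exact Real.sqrt_le_sqrt (by nlinarith)
  nlinarith

lemma key_limit {u : ℕ → ℝ} {B d : ℝ} (hB : 0 < B) (hd : 0 < d)
    (hu : Tendsto u atTop (nhds B)) :
    Tendsto (fun i : ℕ => (mF i)⁻¹ *
      (2 * Real.arsinh (u i * Real.exp (d / 2 * mF i) / 2))) atTop (nhds d) := by
  set A : ℕ → ℝ := fun i => u i * Real.exp (d / 2 * mF i) / 2 with hA
  have huev : ∀ᶠ i in atTop, B / 2 < u i :=
    hu.eventually (lt_mem_nhds (show B / 2 < B by linarith))
  have hA_top : Tendsto A atTop atTop := by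
    have h1 : Tendsto (fun i => Real.exp (d / 2 * mF i)) atTop atTop :=
      Real.tendsto_exp_atTop.comp ((tendsto_const_mul_atTop_of_pos (by linarith)).mpr mF_atTop)
    have hev : ∀ᶠ i in atTop, B / 4 * Real.exp (d / 2 * mF i) ≤ A i := by
      filter_upwards [huev] with i hi
      have he := Real.exp_pos (d / 2 * mF i)
      rw [hA]
      simp only
      nlinarith [he.le]
    exact tendsto_atTop_mono' _ hev
      ((tendsto_const_mul_atTop_of_pos (by linarith)).mpr h1)
  have hlogu : Tendsto (fun i => Real.log (u i / 2)) atTop (nhds (Real.log (B / 2))) :=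
    ((Real.continuousAt_log (by positivity)).tendsto).comp (hu.div_const 2)
  have hinv : Tendsto (fun i => (mF i)⁻¹) atTop (nhds 0) :=
    tendsto_inv_atTop_zero.comp mF_atTop
  have hlogA : Tendsto (fun i => (mF i)⁻¹ * (2 * Real.log (A i))) atTop (nhds d) := by
    have hev : ∀ᶠ i in atTop, (mF i)⁻¹ * (2 * Real.log (u i / 2)) + d =
        (mF i)⁻¹ * (2 * Real.log (A i)) := by
      filter_upwards [huev] with i hi
      have hu2 : (0:ℝ) < u i / 2 := by linarith
      have hlog : Real.log (A i) = Real.log (u i / 2) + d / 2 * mF i := by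
        rw [hA]
        simp only
        rw [show u i * Real.exp (d / 2 * mF i) / 2 = u i / 2 * Real.exp (d / 2 * mF i) by ring,
          Real.log_mul (ne_of_gt hu2) (Real.exp_ne_zero _), Real.log_exp]
      rw [hlog]
      have := (mF_pos i).ne'
      field_simp
    have hbase : Tendsto (fun i => (mF i)⁻¹ * (2 * Real.log (u i / 2)) + d) atTop
        (nhds (0 * (2 * Real.log (B / 2)) + d)) :=
      (hinv.mul (hlogu.const_mul 2)).add_const d
    rw [zero_mul, zero_add] at hbase
    exact Tendsto.congr' hev hbase
  have hev1 : ∀ᶠ i in atTop, 1 ≤ A i := hA_top.eventually_ge_atTop 1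
  have hupper : Tendsto (fun i => (mF i)⁻¹ * (2 * Real.log 3) + (mF i)⁻¹ * (2 * Real.log (A i)))
      atTop (nhds d) := by
    have := (hinv.mul_const (2 * Real.log 3)).add hlogA
    rwa [zero_mul, zero_add] at this
  refine tendsto_of_tendsto_of_tendsto_of_le_of_le' hlogA hupper ?_ ?_
  · filter_upwards [hev1] with i hi
    have := (mF_pos i)
    have h1 := log_le_arsinh hi
    have h2 : (0:ℝ) < (mF i)⁻¹ := by positivity
    nlinarith
  · filter_upwards [hev1] with i hi
    have := (mF_pos i)
    have h1 := arsinh_le_log hi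
    have h2 : (0:ℝ) < (mF i)⁻¹ := by positivity
    nlinarith

def cF (h : Dp) (i : ℕ) : ℝ := ∑ t ∈ h.finite_supp.toFinset, h.toFun t * Real.exp (-t * mF i)

def yF (h : Dp) (i : ℕ) : ℝ := Real.exp (-h.ρ * mF i)

def pt (h : Dp) (i : ℕ) : UpperHalfPlane :=
  UpperHalfPlane.mk ⟨cF h i, yF h i⟩ (Real.exp_pos _)

lemma pt_coe (h : Dp) (i : ℕ) : (pt h i : ℂ) = ⟨cF h i, yF h i⟩ := rfl

lemma pt_im (h : Dp) (i : ℕ) : (pt h i).im = yF h i := rfl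

lemma mem_supp_nonneg {h : Dp} {t : ℝ} (ht : h.toFun t ≠ 0) : 0 ≤ t := by
  by_contra hlt
  exact ht (h.supp_subset t (fun hmem => hlt hmem.1))

lemma dD_self (h : Dp) : dD h h = 0 := by
  unfold dD
  rw [segD_of_forall_eq (fun _ => rfl), min_self]
  ring

lemma tendsto_pair (f1 f2 : Dp) (hne : dD f1 f2 ≠ 0) :
    Tendsto (fun i => (mF i)⁻¹ * dist (pt f1 i) (pt f2 i)) atTop (nhds (dD f1 f2)) := by
  set s := segD f1 f2 with hs
  set d := dD f1 f2 with hd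
  have hs0 : 0 ≤ s := segD_nonneg f1 f2
  have hs1 : s ≤ f1.ρ := segD_le_left f1 f2
  have hs2 : s ≤ f2.ρ := segD_le_right f1 f2
  have hdval : d = f1.ρ + f2.ρ - 2 * s := by rw [hd]; unfold dD; rw [← hs]; ring
  have hd0 : 0 ≤ d := by rw [hdval]; linarith
  have hdpos : 0 < d := lt_of_le_of_ne hd0 (Ne.symm hne)
  set S := f1.finite_supp.toFinset ∪ f2.finite_supp.toFinset with hS
  have hS1 : ∀ i, cF f1 i = ∑ t ∈ S, f1.toFun t * Real.exp (-t * mF i) := by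
    intro i
    apply Finset.sum_subset Finset.subset_union_left
    intro t _ hnot
    rw [Set.Finite.mem_toFinset, Set.mem_setOf_eq, not_not] at hnot
    rw [hnot, zero_mul]
  have hS2 : ∀ i, cF f2 i = ∑ t ∈ S, f2.toFun t * Real.exp (-t * mF i) := by
    intro i
    apply Finset.sum_subset Finset.subset_union_right
    intro t _ hnot
    rw [Set.Finite.mem_toFinset, Set.mem_setOf_eq, not_not] at hnot
    rw [hnot, zero_mul]
  set C := f1.toFun s - f2.toFun s with hCdef
  set Dv := (if s = f1.ρ then (1:ℝ) else 0) - (if s = f2.ρ then (1:ℝ) else 0) with hDvdef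
  -- limit of the rescaled difference of real parts
  have hC : Tendsto (fun i => Real.exp (s * mF i) * (cF f1 i - cF f2 i)) atTop (nhds C) := by
    have heq : ∀ i, Real.exp (s * mF i) * (cF f1 i - cF f2 i)
        = ∑ t ∈ S, (f1.toFun t - f2.toFun t) * Real.exp ((s - t) * mF i) := by
      intro i
      rw [hS1, hS2, ← Finset.sum_sub_distrib, Finset.mul_sum]
      apply Finset.sum_congr rfl
      intro t _
      rw [show (s - t) * mF i = s * mF i + -t * mF i by ring, Real.exp_add]
      ring
    have hsum : Tendsto (fun i => ∑ t ∈ S, (f1.toFun t - f2.toFun t) * Real.exp ((s - t) * mF i))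
        atTop (nhds (∑ t ∈ S, (if t = s then C else 0))) := by
      apply tendsto_finset_sum
      intro t htS
      by_cases hts : t = s
      · subst hts
        simp only [if_pos rfl, sub_self, zero_mul, Real.exp_zero, mul_one]
        exact tendsto_const_nhds
      · simp only [if_neg hts]
        by_cases hz : f1.toFun t - f2.toFun t = 0
        · exact Tendsto.congr (fun i => by rw [hz, zero_mul]) tendsto_const_nhds
        · have ht0 : 0 ≤ t := by
            rw [hS, Finset.mem_union, Set.Finite.mem_toFinset, Set.Finite.mem_toFinset] at htS
            rcases htS with h | h
            · exact mem_supp_nonneg h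
            · exact mem_supp_nonneg h
          have hst : s < t := by
            rcases lt_trichotomy t s with hlt | heq' | hgt
            · exact absurd (sub_eq_zero.mpr (segD_agree f1 f2 t ⟨ht0, hlt⟩)) hz
            · exact absurd heq' hts
            · exact hgt
          have h0 := tendsto_exp_mul_mF (show s - t < 0 by linarith)
          have := h0.const_mul (f1.toFun t - f2.toFun t)
          simpa using this
    have hsumval : (∑ t ∈ S, (if t = s then C else 0)) = C := by
      rw [Finset.sum_ite_eq' S s (fun _ => C)]
      by_cases hsS : s ∈ S
      · rw [if_pos hsS]
      · rw [if_neg hsS, hCdef]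
        rw [hS, Finset.mem_union, Set.Finite.mem_toFinset, Set.Finite.mem_toFinset] at hsS
        push_neg at hsS
        obtain ⟨h1', h2'⟩ := hsS
        simp only [Set.mem_setOf_eq, not_not] at h1' h2'
        rw [h1', h2', sub_zero]
    rw [← hsumval]
    exact Tendsto.congr (fun i => (heq i).symm) hsum
  -- limit of the rescaled difference of imaginary parts
  have hDv : Tendsto (fun i => Real.exp (s * mF i) * (yF f1 i - yF f2 i)) atTop (nhds Dv) := by
    have heq : ∀ i, Real.exp (s * mF i) * (yF f1 i - yF f2 i)
        = Real.exp ((s - f1.ρ) * mF i) - Real.exp ((s - f2.ρ) * mF i) := by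
      intro i
      unfold yF
      rw [show (s - f1.ρ) * mF i = s * mF i + -f1.ρ * mF i by ring,
        show (s - f2.ρ) * mF i = s * mF i + -f2.ρ * mF i by ring, Real.exp_add, Real.exp_add]
      ring
    have hterm : ∀ (ρ0 : ℝ), s ≤ ρ0 → Tendsto (fun i => Real.exp ((s - ρ0) * mF i)) atTop
        (nhds (if s = ρ0 then (1:ℝ) else 0)) := by
      intro ρ0 hρ0
      by_cases h : s = ρ0
      · rw [if_pos h, h]
        simp only [sub_self, zero_mul, Real.exp_zero]
        exact tendsto_const_nhds
      · rw [if_neg h]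
        exact tendsto_exp_mul_mF (by rcases lt_of_le_of_ne hρ0 h with h'; linarith)
    have := (hterm f1.ρ hs1).sub (hterm f2.ρ hs2)
    rw [← hDvdef] at this
    exact Tendsto.congr (fun i => (heq i).symm) this
  set B := Real.sqrt (C ^ 2 + Dv ^ 2) with hBdef
  -- the rescaled Euclidean distance of the two points converges to B
  set u : ℕ → ℝ := fun i => Real.exp (s * mF i) * ‖(pt f1 i : ℂ) - (pt f2 i : ℂ)‖
    with hu
  have habs : Tendsto u atTop (nhds B) := by
    have hzeq : ∀ i, ((pt f1 i : ℂ) - (pt f2 i : ℂ)) =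
        Complex.mk (cF f1 i - cF f2 i) (yF f1 i - yF f2 i) := by
      intro i
      apply Complex.ext <;> simp [pt_coe]
    have huval : ∀ i, u i = Real.sqrt ((Real.exp (s * mF i) * (cF f1 i - cF f2 i)) ^ 2 +
        (Real.exp (s * mF i) * (yF f1 i - yF f2 i)) ^ 2) := by
      intro i
      rw [hu]
      simp only
      rw [hzeq i, Complex.norm_def, Complex.normSq_mk]
      have he : (0:ℝ) ≤ Real.exp (s * mF i) := (Real.exp_pos _).le
      rw [show Real.exp (s * mF i) = Real.sqrt (Real.exp (s * mF i) ^ 2) from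
        (Real.sqrt_sq he).symm]
      rw [← Real.sqrt_mul (sq_nonneg _)]
      rw [Real.sqrt_sq he]
      congr 1
      ring
    have hcomp : Tendsto (fun i => (Real.exp (s * mF i) * (cF f1 i - cF f2 i)) ^ 2 +
        (Real.exp (s * mF i) * (yF f1 i - yF f2 i)) ^ 2) atTop (nhds (C ^ 2 + Dv ^ 2)) :=
      (hC.pow 2).add (hDv.pow 2)
    have := (Real.continuous_sqrt.tendsto _).comp hcomp
    exact Tendsto.congr (fun i => (huval i).symm) this
  have hB : 0 < B := by
    rw [hBdef]
    apply Real.sqrt_pos.mpr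
    by_cases h1 : s = f1.ρ
    · by_cases h2 : s = f2.ρ
      · exfalso; rw [hdval] at hdpos; linarith [hdpos, h1 ▸ le_refl s]
      · have : Dv = 1 := by rw [hDvdef, if_pos h1, if_neg h2, sub_zero]
        rw [this]; nlinarith [sq_nonneg C]
    · by_cases h2 : s = f2.ρ
      · have : Dv = -1 := by rw [hDvdef, if_neg h1, if_pos h2, zero_sub]
        rw [this]; nlinarith [sq_nonneg C]
      · have hsm : s < min f1.ρ f2.ρ :=
          lt_min (lt_of_le_of_ne hs1 h1) (lt_of_le_of_ne hs2 h2)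
        have := ne_at_segD (hs ▸ hsm)
        have hCne : C ≠ 0 := sub_ne_zero.mpr (by rw [hs]; exact this)
        nlinarith [sq_nonneg Dv, sq_pos_of_ne_zero hCne]
  -- rewrite the hyperbolic distance
  have hdist : ∀ i, dist (pt f1 i) (pt f2 i) =
      2 * Real.arsinh (u i * Real.exp (d / 2 * mF i) / 2) := by
    intro i
    rw [UpperHalfPlane.dist_eq, Complex.dist_eq, pt_im, pt_im]
    congr 2
    unfold yF
    rw [← Real.exp_add, ← Real.exp_half, hu]
    simp only
    set E := Real.exp ((-f1.ρ * mF i + -f2.ρ * mF i) / 2) with hE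
    have hEpos : (0:ℝ) < E := Real.exp_pos _
    have hkey : Real.exp (s * mF i) * Real.exp (d / 2 * mF i) * E = 1 := by
      rw [hE, ← Real.exp_add, ← Real.exp_add,
        show s * mF i + d / 2 * mF i + (-f1.ρ * mF i + -f2.ρ * mF i) / 2 =
          (d - (f1.ρ + f2.ρ - 2 * s)) / 2 * mF i by ring,
        show (d - (f1.ρ + f2.ρ - 2 * s)) / 2 * mF i = 0 by rw [hdval]; ring,
        Real.exp_zero]
    rw [div_eq_div_iff (by positivity) (by norm_num : (2:ℝ) ≠ 0)]
    linear_combination (-(2 * ‖(pt f1 i : ℂ) - (pt f2 i : ℂ)‖)) * hkey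
  have := key_limit hB hdpos habs
  exact Tendsto.congr (fun i => by rw [hdist i]) this

/-- `D` is an asymptotic subcone of the hyperbolic plane (here
the upper half-plane with its hyperbolic metric): it is geodesic, and every
finite subset of `D` can be isometrically embedded at infinity. -/
theorem Dp_asymptotic_subcone :
    (∀ a b : Dp, ∃ g : ℝ → Dp, g 0 = a ∧ g (dD a b) = b ∧
      ∀ x ∈ Set.Icc 0 (dD a b), ∀ y ∈ Set.Icc 0 (dD a b), dD (g x) (g y) = |x - y|) ∧
    (∀ (n : ℕ) (f : Fin n → Dp),
      ∃ ε : ℕ → ℝ, (∀ i, 0 < ε i) ∧ Tendsto ε atTop (nhds 0) ∧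
      ∃ x : Fin n → ℕ → UpperHalfPlane,
        ∀ k1 k2 : Fin n,
          Tendsto (fun i => ε i * dist (x k1 i) (x k2 i)) atTop
            (nhds (dD (f k1) (f k2)))) := by
  constructor
  · exact Dp_geodesic
  · intro n f
    refine ⟨fun i => (mF i)⁻¹, fun i => by have := mF_pos i; positivity,
      tendsto_inv_atTop_zero.comp mF_atTop, fun k i => pt (f k) i, fun k1 k2 => ?_⟩
    by_cases h : dD (f k1) (f k2) = 0
    · obtain ⟨h1, h2⟩ := dD_eq_zero h
      have hfe : f k1 = f k2 := Dp.ext' h1 h2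
      rw [h]
      simp only [hfe]
      simp only [dist_self, mul_zero]
      exact tendsto_const_nhds
    · exact tendsto_pair (f k1) (f k2) h
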